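/- Suppose x and p are elements of an associative ℂ-algebra satisfying the q-deformed Heisenberg relation x*p − q*(p*x) = iħ·1 with q ∈ ℂ and ħ ≠ 0. Then for every n ≥ 1: x*p^n − q^n*(p^n*x) = iħ·[n]_q·p^(n−1), where [n]_q = 1 + q + ⋯ + q^(n−1). -/
import Mathlib


theorem q_heisenberg_power {A : Type*} [Ring A] [Algebra ℂ A]
    (q : ℂ) (hbar : ℝ) (hhbar : hbar ≠ 0) (x p : A)
    (h : x * p - q • (p * x) = (Complex.I * (hbar:ℂ)) • (1 : A)) :
    ∀ n : ℕ, 1 ≤ n →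
      x * p ^ n - q ^ n • (p ^ n * x)
        = ((Complex.I * (hbar:ℂ)) * ∑ i ∈ Finset.range n, q ^ i) • p ^ (n - 1) := by
  have hxp : x * p = q • (p * x) + (Complex.I * (hbar:ℂ)) • (1 : A) := by
    linear_combination (norm := module) h
  intro n hn
  induction n with
  | zero => omega
  | succ m ih =>
    rcases Nat.eq_zero_or_pos m with hm | hm
    · subst hm
      simpa using h
    · have ihm := ih hm
      have hxpm : x * p ^ m = q ^ m • (p ^ m * x)
          + ((Complex.I * (hbar:ℂ)) * ∑ i ∈ Finset.range m, q ^ i) • p ^ (m - 1) := by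
        linear_combination (norm := module) ihm
      obtain ⟨k, rfl⟩ : ∃ k, m = k + 1 := ⟨m - 1, by omega⟩
      simp only [Nat.add_sub_cancel] at hxpm ⊢
      calc x * p ^ (k + 1 + 1) - q ^ (k + 1 + 1) • (p ^ (k + 1 + 1) * x)
          = (x * p ^ (k + 1)) * p - q ^ (k + 1 + 1) • (p ^ (k + 1 + 1) * x) := by
            rw [pow_succ, ← mul_assoc]
        _ = (q ^ (k + 1) • (p ^ (k + 1) * x)
              + ((Complex.I * (hbar:ℂ)) * ∑ i ∈ Finset.range (k + 1), q ^ i) • p ^ k) * p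
            - q ^ (k + 1 + 1) • (p ^ (k + 1 + 1) * x) := by rw [hxpm]
        _ = q ^ (k + 1) • (p ^ (k + 1) * (x * p))
              + ((Complex.I * (hbar:ℂ)) * ∑ i ∈ Finset.range (k + 1), q ^ i) • p ^ (k + 1)
            - q ^ (k + 1 + 1) • (p ^ (k + 1 + 1) * x) := by
            rw [add_mul, smul_mul_assoc, smul_mul_assoc, mul_assoc, mul_assoc, ← pow_succ]
        _ = q ^ (k + 1) • (p ^ (k + 1) * (q • (p * x) + (Complex.I * (hbar:ℂ)) • (1 : A)))
              + ((Complex.I * (hbar:ℂ)) * ∑ i ∈ Finset.range (k + 1), q ^ i) • p ^ (k + 1)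
            - q ^ (k + 1 + 1) • (p ^ (k + 1 + 1) * x) := by rw [hxp]
        _ = ((Complex.I * (hbar:ℂ)) * ∑ i ∈ Finset.range (k + 1 + 1), q ^ i) • p ^ (k + 1) := by
            simp only [Finset.sum_range_succ]
            have : p ^ (k + 1) * (p * x) = p ^ (k + 1 + 1) * x := by
              rw [← mul_assoc, ← pow_succ]
            rw [mul_add, mul_smul_comm, mul_smul_comm, mul_one, this]
            module
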